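/- arXiv:1507.06479 — 2 statements merged into one kernel-verified Lean document; each statement's English description precedes it below -/
import Mathlib

section
/- (Thermal equilibrium of mixed states with large full effective dimension.) Let E be a finite-dimensional complex inner product space, let E₀ ⊆ E be a subspace of dimension D ≥ 1 with orthogonal projection Q, and let H be a self-adjoint operator on E that leaves E₀ invariant. Let ρ be a positive semidefinite operator with Tr ρ = 1 whose range is contained in E₀, and set ρ(t) := exp(−itH) ρ exp(itH). Let P be a self-adjoint operator with 0 ≤ P ≤ 1. Let V > 0, α > 0, ν > 0 and 0 ≤ η < γ with γ − η > 2(α+ν). Assume the thermodynamic bound Tr(Q P Q)/D ≤ exp(−γV) and the full effective-dimension bound D_eff^{full} := (Tr ρ²)^{−1} ≥ exp(−ηV)·D. Then for every t ∈ ℝ one has Tr( ρ(t) P ) ≤ exp(−αV). -/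
open MeasureTheory

lemma trace_eq_sum_inner_onb {E : Type*} [NormedAddCommGroup E] [InnerProductSpace ℂ E]
    [FiniteDimensional ℂ E] {ι : Type*} [Fintype ι] [DecidableEq ι]
    (b : OrthonormalBasis ι ℂ E) (f : E →L[ℂ] E) :
    LinearMap.trace ℂ E f.toLinearMap = ∑ i, (inner ℂ (b i) (f (b i)) : ℂ) := by
  rw [LinearMap.trace_eq_matrix_trace ℂ b.toBasis, Matrix.trace]
  congr 1
  ext i
  rw [Matrix.diag_apply, LinearMap.toMatrix_apply, OrthonormalBasis.coe_toBasis_repr_apply,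
    OrthonormalBasis.repr_apply_apply, OrthonormalBasis.coe_toBasis]
  rfl

set_option maxHeartbeats 1000000 in
/-- **Thermal equilibrium of mixed states with large full effective dimension.**  Let `Q` be
the orthogonal projection onto a `D`-dimensional subspace `E₀` invariant under the
self-adjoint Hamiltonian `H`, let `ρ` be a density matrix with range in `E₀` and
`ρ(t) = exp(−itH) ρ exp(itH)`, and let `0 ≤ P ≤ 1`.  If `Tr(QPQ)/D ≤ exp(−γV)` and
`(Tr ρ²)⁻¹ ≥ exp(−ηV)·D` with `γ − η > 2(α+ν)`, then `Tr(ρ(t)P) ≤ exp(−αV)` for all `t`. -/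
theorem mixed_state_large_full_effective_dimension
    {E : Type*} [NormedAddCommGroup E] [InnerProductSpace ℂ E] [FiniteDimensional ℂ E]
    (E0 : Submodule ℂ E) {D : ℕ} (hD : 1 ≤ D) (hdim : Module.finrank ℂ E0 = D)
    (Q : E →L[ℂ] E) (hQ : IsSelfAdjoint Q) (hQidem : Q ∘L Q = Q)
    (hQrange : LinearMap.range Q.toLinearMap = E0)
    (H : E →L[ℂ] E) (hH : IsSelfAdjoint H) (hinvar : ∀ x ∈ E0, H x ∈ E0)
    (ρ : E →L[ℂ] E) (hρ : IsSelfAdjoint ρ)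
    (hρpos : ∀ x : E, 0 ≤ (inner ℂ x (ρ x) : ℂ).re)
    (hρtr : LinearMap.trace ℂ E ρ.toLinearMap = 1)
    (hρrange : LinearMap.range ρ.toLinearMap ≤ E0)
    (ρt : ℝ → E →L[ℂ] E)
    (hρt : ∀ t : ℝ, ρt t =
      NormedSpace.exp (((-Complex.I) * (t : ℂ)) • H) ∘L ρ ∘L
        NormedSpace.exp ((Complex.I * (t : ℂ)) • H))
    (P : E →L[ℂ] E) (hP : IsSelfAdjoint P)
    (hP0 : ∀ x : E, 0 ≤ (inner ℂ x (P x) : ℂ).re)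
    (hP1 : ∀ x : E, (inner ℂ x (P x) : ℂ).re ≤ ‖x‖ ^ 2)
    (V α ν η γ : ℝ) (hV : 0 < V) (hα : 0 < α) (hν : 0 < ν) (hη : 0 ≤ η) (hηγ : η < γ)
    (hgap : 2 * (α + ν) < γ - η)
    (htdb : (LinearMap.trace ℂ E (Q ∘L P ∘L Q).toLinearMap).re / (D : ℝ)
      ≤ Real.exp (-γ * V))
    (heff : Real.exp (-η * V) * (D : ℝ)
      ≤ ((LinearMap.trace ℂ E (ρ ∘L ρ).toLinearMap).re)⁻¹) :
    ∀ t : ℝ, (LinearMap.trace ℂ E ((ρt t) ∘L P).toLinearMap).re ≤ Real.exp (-α * V) := by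
  intro t
  classical
  set Trc : (E →L[ℂ] E) → ℂ := fun f => LinearMap.trace ℂ E f.toLinearMap with hTrcdef
  have trc_mul_comm : ∀ f g : E →L[ℂ] E, Trc (f * g) = Trc (g * f) := by
    intro f g
    exact LinearMap.trace_mul_comm ℂ f.toLinearMap g.toLinearMap
  -- moving self-adjoint operators across the inner ℂ product
  have hmove : ∀ (A : E →L[ℂ] E), IsSelfAdjoint A → ∀ x y : E,
      (inner ℂ (A x) y : ℂ) = inner ℂ x (A y) := by
    intro A hA x y
    conv_lhs => rw [← hA.adjoint_eq]
    exact ContinuousLinearMap.adjoint_inner_left A y x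
  -- basic facts about Q
  have hQapp : ∀ x, Q (Q x) = Q x := by
    intro x
    have h := ContinuousLinearMap.ext_iff.mp hQidem x
    rwa [ContinuousLinearMap.comp_apply] at h
  have hQmem : ∀ x, Q x ∈ E0 := fun x => hQrange ▸ LinearMap.mem_range_self _ x
  have hQfix : ∀ x ∈ E0, Q x = x := by
    intro x hx
    rw [← hQrange] at hx
    obtain ⟨y, rfl⟩ := hx
    exact hQapp y
  -- Q commutes with H
  have hQH : ∀ x, Q (H x) = H (Q x) := by
    have key : ∀ y, Q y = 0 → Q (H y) = 0 := by
      intro y hy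
      have h0 : (inner ℂ (Q (H y)) (Q (H y)) : ℂ) = 0 := by
        calc (inner ℂ (Q (H y)) (Q (H y)) : ℂ)
            = inner ℂ (H y) (Q (Q (H y))) := hmove Q hQ _ _
          _ = inner ℂ (H y) (Q (H y)) := by rw [hQapp]
          _ = inner ℂ y (H (Q (H y))) := hmove H hH _ _
          _ = inner ℂ y (Q (H (Q (H y)))) := by
              rw [hQfix (H (Q (H y))) (hinvar _ (hQmem (H y)))]
          _ = inner ℂ (Q y) (H (Q (H y))) := (hmove Q hQ _ _).symm
          _ = 0 := by rw [hy, inner_zero_left]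
      simpa [inner_self_eq_zero] using h0
    intro x
    have h1 : Q (x - Q x) = 0 := by rw [map_sub, hQapp, sub_self]
    have h2 := key _ h1
    have h3 : Q (H x) - Q (H (Q x)) = 0 := by
      rw [map_sub, map_sub] at h2
      exact h2
    have h4 : Q (H x) = Q (H (Q x)) := sub_eq_zero.mp h3
    rw [h4, hQfix _ (hinvar _ (hQmem x))]
  -- unitaries
  set c₁ : ℂ := (-Complex.I) * (t : ℂ) with hc₁
  set c₂ : ℂ := Complex.I * (t : ℂ) with hc₂
  set U := NormedSpace.exp (c₁ • H) with hUdef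
  set W := NormedSpace.exp (c₂ • H) with hWdef
  have hcomm : Commute (c₁ • H) (c₂ • H) := ((Commute.refl H).smul_left c₁).smul_right c₂
  have hc12 : c₁ + c₂ = 0 := by rw [hc₁, hc₂]; ring
  have hUW : U * W = 1 := by
    rw [hUdef, hWdef, ← NormedSpace.exp_add_of_commute_of_mem_ball (𝕂 := ℂ) hcomm
      ((NormedSpace.expSeries_radius_eq_top ℂ (E →L[ℂ] E)).symm ▸ edist_lt_top _ _) ((NormedSpace.expSeries_radius_eq_top ℂ (E →L[ℂ] E)).symm ▸ edist_lt_top _ _), ← add_smul, hc12, zero_smul,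
      NormedSpace.exp_zero]
  have hWU : W * U = 1 := by
    rw [hUdef, hWdef, ← NormedSpace.exp_add_of_commute_of_mem_ball (𝕂 := ℂ) hcomm.symm
      ((NormedSpace.expSeries_radius_eq_top ℂ (E →L[ℂ] E)).symm ▸ edist_lt_top _ _) ((NormedSpace.expSeries_radius_eq_top ℂ (E →L[ℂ] E)).symm ▸ edist_lt_top _ _), ← add_smul]
    rw [add_comm] at hc12
    rw [hc12, zero_smul, NormedSpace.exp_zero]
  have hstarc : ∀ c : ℂ, star (c • H) = (starRingEnd ℂ c) • H := by
    intro c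
    rw [star_smul, hH.star_eq]
    rfl
  have hstarU : star U = W := by
    rw [hUdef, hWdef, NormedSpace.star_exp, hstarc]
    congr 2
    rw [hc₁, hc₂]
    simp [map_mul, Complex.conj_ofReal]
  have hstarW : star W = U := by
    rw [hUdef, hWdef, NormedSpace.star_exp, hstarc]
    congr 2
    rw [hc₁, hc₂]
    simp [map_mul, Complex.conj_ofReal]
  -- ρ facts
  have hρmem : ∀ x, ρ x ∈ E0 := fun x => hρrange (LinearMap.mem_range_self _ x)
  have hQρ : Q * ρ = ρ := by
    ext x
    rw [ContinuousLinearMap.mul_apply]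
    exact hQfix _ (hρmem x)
  have hρQ : ρ * Q = ρ := by
    have h := congrArg star hQρ
    rwa [star_mul, hQ.star_eq, hρ.star_eq] at h
  -- Q commutes with U and W
  have hQHc : Commute Q H := by
    ext x
    simp only [ContinuousLinearMap.mul_apply]
    exact hQH x
  have hQU : Commute Q U := (hQHc.smul_right c₁).exp_right
  have hQW : Commute Q W := (hQHc.smul_right c₂).exp_right
  -- the evolved state
  set S := ρt t with hSdef
  have hS : S = U * ρ * W := by rw [hSdef, hρt t]; rfl
  have hSsa : IsSelfAdjoint S := by
    rw [hS]
    show star (U * ρ * W) = U * ρ * W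
    rw [star_mul, star_mul, hstarU, hstarW, hρ.star_eq, mul_assoc]
  have h1 : Q * S = S := by
    rw [hS, ← mul_assoc, ← mul_assoc, hQU.eq, mul_assoc U Q ρ, hQρ]
  have h2 : S * Q = S := by
    rw [hS, mul_assoc (U * ρ) W Q, ← hQW.eq, ← mul_assoc, mul_assoc U ρ Q, hρQ]
  have hSpos : ∀ x, 0 ≤ (inner ℂ x (S x) : ℂ).re := by
    intro x
    have hUadj : U = ContinuousLinearMap.adjoint W := by
      rw [← ContinuousLinearMap.star_eq_adjoint, hstarW]
    have he : S x = U (ρ (W x)) := by rw [hS]; rfl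
    have h : (inner ℂ x (S x) : ℂ) = inner ℂ (W x) (ρ (W x)) := by
      rw [he, hUadj]
      exact ContinuousLinearMap.adjoint_inner_right W x _
    rw [h]
    exact hρpos (W x)
  -- trace identities
  have htrST : Trc (S * P) = Trc (S * (Q * (P * Q))) := by
    calc Trc (S * P) = Trc ((Q * S) * P) := by rw [h1]
      _ = Trc (Q * (S * P)) := by rw [mul_assoc]
      _ = Trc ((S * P) * Q) := trc_mul_comm _ _
      _ = Trc (S * (P * Q)) := by rw [mul_assoc]
      _ = Trc ((S * Q) * (P * Q)) := by rw [h2]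
      _ = Trc (S * (Q * (P * Q))) := by rw [mul_assoc]
  have htrSS : Trc (S * S) = Trc (ρ * ρ) := by
    have e : S * S = U * (ρ * (ρ * W)) := by
      rw [hS]
      simp only [mul_assoc]
      rw [← mul_assoc W U, hWU, one_mul]
    have e2 : (ρ * (ρ * W)) * U = ρ * ρ := by
      simp only [mul_assoc]
      rw [hWU, mul_one]
    rw [e, trc_mul_comm, e2]
  have htrS : Trc S = 1 := by
    have e : S = U * (ρ * W) := by rw [hS, mul_assoc]
    rw [e, trc_mul_comm, mul_assoc, hWU, mul_one]
    exact hρtr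
  -- spectral decomposition of S
  set n := Module.finrank ℂ E with hndef
  have hn : Module.finrank ℂ E = n := rfl
  have hSsym : (S.toLinearMap).IsSymmetric := hSsa.isSymmetric
  set b := hSsym.eigenvectorBasis hn with hbdef
  set μ := hSsym.eigenvalues hn with hμdef
  have hb : ∀ i, S (b i) = (μ i : ℂ) • b i := fun i => hSsym.apply_eigenvectorBasis hn i
  have hbnorm : ∀ i, ‖b i‖ = 1 := fun i => b.orthonormal.1 i
  have hbinner : ∀ i, (inner ℂ (b i) (b i) : ℂ) = 1 := by
    intro i
    rw [inner_self_eq_norm_sq_to_K, hbnorm]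
    norm_num
  have hμ0 : ∀ i, 0 ≤ μ i := by
    intro i
    have h := hSpos (b i)
    rw [hb i, inner_smul_right, hbinner i, mul_one] at h
    simpa using h
  -- the diagonal values of QPQ
  set τ : Fin n → ℝ := fun i => (inner ℂ (b i) ((Q * (P * Q)) (b i)) : ℂ).re with hτdef
  have hτeq : ∀ i, τ i = (inner ℂ (Q (b i)) (P (Q (b i))) : ℂ).re := by
    intro i
    rw [hτdef]
    simp only
    rw [show ((Q * (P * Q)) (b i)) = Q (P (Q (b i))) from rfl,
      ← hmove Q hQ (b i) (P (Q (b i)))]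
  have hτ0 : ∀ i, 0 ≤ τ i := fun i => by rw [hτeq]; exact hP0 _
  have hQnorm : ∀ x : E, ‖Q x‖ ^ 2 ≤ ‖x‖ ^ 2 := by
    intro x
    have h1 : (‖Q x‖ ^ 2 : ℝ) = (inner ℂ x (Q x) : ℂ).re := by
      rw [← inner_self_eq_norm_sq (𝕜 := ℂ) (Q x), hmove Q hQ x (Q x), hQapp]
      rfl
    have h2 : (inner ℂ x (Q x) : ℂ).re ≤ ‖x‖ * ‖Q x‖ := by
      calc (inner ℂ x (Q x) : ℂ).re ≤ ‖(inner ℂ x (Q x) : ℂ)‖ := Complex.re_le_norm _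
        _ ≤ ‖x‖ * ‖Q x‖ := by
            exact norm_inner_le_norm x (Q x)
    nlinarith [sq_nonneg (‖x‖ - ‖Q x‖), norm_nonneg (Q x), norm_nonneg x]
  have hτ1 : ∀ i, τ i ≤ 1 := by
    intro i
    rw [hτeq]
    calc (inner ℂ (Q (b i)) (P (Q (b i))) : ℂ).re ≤ ‖Q (b i)‖ ^ 2 := hP1 _
      _ ≤ ‖b i‖ ^ 2 := hQnorm _
      _ = 1 := by rw [hbnorm]; norm_num
  -- trace sums
  have htrT : (Trc (Q * (P * Q))).re = ∑ i, τ i := by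
    rw [hTrcdef]
    simp only
    rw [trace_eq_sum_inner_onb b, Complex.re_sum]
  have htrSS' : (Trc (S * S)).re = ∑ i, (μ i) ^ 2 := by
    rw [hTrcdef]
    simp only
    rw [trace_eq_sum_inner_onb b, Complex.re_sum]
    apply Finset.sum_congr rfl
    intro i _
    have e : (S * S) (b i) = (μ i : ℂ) • ((μ i : ℂ) • b i) := by
      rw [ContinuousLinearMap.mul_apply, hb, _root_.map_smul, hb]
    rw [e, inner_smul_right, inner_smul_right, hbinner, mul_one]
    simp [← Complex.ofReal_mul, sq]
  have htrSP : (Trc (S * P)).re = ∑ i, μ i * τ i := by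
    rw [htrST, trc_mul_comm, hTrcdef]
    simp only
    rw [trace_eq_sum_inner_onb b, Complex.re_sum]
    apply Finset.sum_congr rfl
    intro i _
    have e : ((Q * (P * Q)) * S) (b i) = (μ i : ℂ) • ((Q * (P * Q)) (b i)) := by
      rw [ContinuousLinearMap.mul_apply, hb, _root_.map_smul]
    rw [e, inner_smul_right]
    rw [show ((μ i : ℂ) * inner ℂ (b i) ((Q * (P * Q)) (b i))).re
        = μ i * (inner ℂ (b i) ((Q * (P * Q)) (b i)) : ℂ).re from by
      rw [Complex.mul_re, Complex.ofReal_re, Complex.ofReal_im]; ring]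
  have hsumμ : ∑ i, μ i = 1 := by
    have h := htrS
    rw [hTrcdef] at h
    simp only at h
    rw [trace_eq_sum_inner_onb b] at h
    have h' : ∑ i, (inner ℂ (b i) (S (b i)) : ℂ) = ∑ i, ((μ i : ℝ) : ℂ) := by
      apply Finset.sum_congr rfl
      intro i _
      rw [hb, inner_smul_right, hbinner, mul_one]
    rw [h'] at h
    exact_mod_cast h
  -- positivity of Tr ρ²
  have hAeq : (LinearMap.trace ℂ E (ρ ∘L ρ).toLinearMap).re = ∑ i, (μ i) ^ 2 := by
    have : (Trc (ρ * ρ)).re = ∑ i, (μ i) ^ 2 := by rw [← htrSS]; exact htrSS'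
    exact this
  have hApos : 0 < ∑ i, (μ i) ^ 2 := by
    have hex : ∃ i, μ i ≠ 0 := by
      by_contra hall
      push_neg at hall
      rw [Finset.sum_eq_zero (fun i _ => hall i)] at hsumμ
      norm_num at hsumμ
    obtain ⟨i, hi⟩ := hex
    have h : 0 < (μ i) ^ 2 := pow_two_pos_of_ne_zero hi
    exact lt_of_lt_of_le h (Finset.single_le_sum (fun j _ => sq_nonneg (μ j)) (Finset.mem_univ i))
  -- numeric part
  set A := ∑ i, (μ i) ^ 2 with hAdef
  set B := ∑ i, τ i with hBdef
  have hDpos : (0 : ℝ) < D := by exact_mod_cast hD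
  have hBle : B ≤ Real.exp (-γ * V) * D := by
    have h := htdb
    rw [div_le_iff₀ hDpos] at h
    calc B = (LinearMap.trace ℂ E (Q ∘L P ∘L Q).toLinearMap).re := (htrT).symm
      _ ≤ Real.exp (-γ * V) * D := h
  have hB0 : 0 ≤ B := Finset.sum_nonneg fun i _ => hτ0 i
  have hepos : (0 : ℝ) < Real.exp (-η * V) * D := mul_pos (Real.exp_pos _) hDpos
  have hAle : A ≤ (Real.exp (-η * V) * D)⁻¹ := by
    have h := heff
    rw [hAeq] at h
    have h' := inv_anti₀ hepos h
    rwa [inv_inv] at h'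
  have hCS : (∑ i, μ i * τ i) ^ 2 ≤ A * B := by
    calc (∑ i, μ i * τ i) ^ 2 ≤ (∑ i, (μ i) ^ 2) * ∑ i, (τ i) ^ 2 :=
          Finset.sum_mul_sq_le_sq_mul_sq Finset.univ μ τ
      _ ≤ A * B := by
          apply mul_le_mul_of_nonneg_left _ (le_of_lt hApos)
          apply Finset.sum_le_sum
          intro i _
          nlinarith [hτ0 i, hτ1 i]
  have hAB : A * B ≤ Real.exp ((η - γ) * V) := by
    have h : A * B ≤ (Real.exp (-η * V) * D)⁻¹ * (Real.exp (-γ * V) * D) := by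
      apply mul_le_mul hAle hBle hB0 (le_of_lt (inv_pos.mpr hepos))
    calc A * B ≤ (Real.exp (-η * V) * D)⁻¹ * (Real.exp (-γ * V) * D) := h
      _ = Real.exp ((η - γ) * V) := by
          have hD0 : (D : ℝ) ≠ 0 := ne_of_gt hDpos
          have e3 : (Real.exp (-η * V) * D)⁻¹ * (Real.exp (-γ * V) * D)
              = (Real.exp (-η * V))⁻¹ * Real.exp (-γ * V) * ((D : ℝ)⁻¹ * D) := by ring
          rw [e3, inv_mul_cancel₀ hD0, mul_one, ← Real.exp_neg, ← Real.exp_add]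
          congr 1
          ring
  have hC0 : 0 ≤ ∑ i, μ i * τ i :=
    Finset.sum_nonneg fun i _ => mul_nonneg (hμ0 i) (hτ0 i)
  have hmain : ∑ i, μ i * τ i ≤ Real.exp ((η - γ) * V / 2) := by
    have hs : Real.exp ((η - γ) * V) = Real.exp ((η - γ) * V / 2) ^ 2 := by
      rw [sq, ← Real.exp_add]
      ring_nf
    have h2 : (∑ i, μ i * τ i) ^ 2 ≤ Real.exp ((η - γ) * V / 2) ^ 2 := by
      calc (∑ i, μ i * τ i) ^ 2 ≤ A * B := hCS
        _ ≤ Real.exp ((η - γ) * V) := hAB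
        _ = Real.exp ((η - γ) * V / 2) ^ 2 := hs
    nlinarith [Real.exp_pos ((η - γ) * V / 2), hC0]
  have hfinal : Real.exp ((η - γ) * V / 2) ≤ Real.exp (-α * V) := by
    apply Real.exp_le_exp.mpr
    nlinarith [mul_pos hV hν]
  calc (LinearMap.trace ℂ E ((ρt t) ∘L P).toLinearMap).re
      = (Trc (S * P)).re := rfl
    _ = ∑ i, μ i * τ i := htrSP
    _ ≤ Real.exp ((η - γ) * V / 2) := hmain
    _ ≤ Real.exp (-α * V) := hfinal
end

section
/- (Thermalization of mixed initial states with large diagonal effective dimension.) Let E be a finite-dimensional complex inner product space, H a self-adjoint operator on E, and (ψ_j)_{j∈J} an orthonormal family of eigenvectors of H with pairwise distinct eigenvalues, |J| = D ≥ 1. Let ρ be a positive semidefinite operator with Tr ρ = 1 whose range is contained in the span of (ψ_j)_{j∈J}, set ρ(t) := exp(−itH) ρ exp(itH), and let P be a self-adjoint operator with 0 ≤ P ≤ 1. Then the long-time average converges: lim_{τ→∞} (1/τ)∫₀^τ Tr( ρ(t) P ) dt = ∑_{j∈J} ⟨ψ_j, ρ ψ_j⟩·⟨ψ_j, P ψ_j⟩.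 Moreover, if for constants V > 0, α > 0, ν > 0, 0 ≤ η < γ with γ − η > 2(α+ν) one has (1/D)∑_{j∈J}⟨ψ_j, P ψ_j⟩ ≤ exp(−γV) and D_eff^{diag} := ( ∑_{j∈J} ⟨ψ_j, ρ ψ_j⟩² )^{−1} ≥ exp(−ηV)·D, then there exists τ₀ > 0 such that for every τ ≥ τ₀, (1/τ)∫₀^τ Tr( ρ(t) P ) dt ≤ exp(−(α+ν)V). -/
open MeasureTheory Filter

section ThermalizationHelpers

lemma exp_apply_eigen {E : Type*} [NormedAddCommGroup E] [InnerProductSpace ℂ E]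
    [FiniteDimensional ℂ E] (A : E →L[ℂ] E) (x : E) (a : ℂ) (h : A x = a • x) :
    NormedSpace.exp A x = Complex.exp a • x := by
  have hpow : ∀ n : ℕ, (A ^ n) x = a ^ n • x := by
    intro n; induction n with
    | zero => simp
    | succ n ih =>
      rw [pow_succ, pow_succ, ContinuousLinearMap.mul_apply, h, _root_.map_smul, ih, smul_smul,
        mul_comm]
  have hsum : Summable fun n : ℕ => ((n.factorial : ℂ))⁻¹ • A ^ n :=
    NormedSpace.expSeries_summable' (𝕂 := ℂ) A
  have h1 : NormedSpace.exp A x = ∑' n : ℕ, (((n.factorial : ℂ))⁻¹ • A ^ n) x := by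
    rw [NormedSpace.exp_eq_tsum ℂ]
    exact (ContinuousLinearMap.apply ℂ E x).map_tsum hsum
  rw [h1]
  have h2 : ∀ n : ℕ, (((n.factorial : ℂ))⁻¹ • A ^ n) x = (((n.factorial : ℂ))⁻¹ • a ^ n) • x := by
    intro n
    rw [ContinuousLinearMap.smul_apply, hpow, smul_smul, smul_eq_mul]
  rw [tsum_congr h2, (NormedSpace.expSeries_summable' (𝕂 := ℂ) a).tsum_smul_const]
  congr 1
  rw [Complex.exp_eq_exp_ℂ, NormedSpace.exp_eq_tsum ℂ]

lemma trace_rankOne {E : Type*} [NormedAddCommGroup E] [InnerProductSpace ℂ E]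
    [FiniteDimensional ℂ E] (φ : E →L[ℂ] ℂ) (u : E) :
    LinearMap.trace ℂ E (φ.smulRight u).toLinearMap = φ u := by
  have h1 : (φ.smulRight u).toLinearMap =
      (LinearMap.toSpanSingleton ℂ E u) ∘ₗ (φ.toLinearMap) := by
    ext x; simp [LinearMap.toSpanSingleton_apply]
  rw [h1, LinearMap.trace_comp_comm']
  have h2 : (φ.toLinearMap) ∘ₗ (LinearMap.toSpanSingleton ℂ E u) = (φ u) • LinearMap.id := by
    ext; simp [LinearMap.toSpanSingleton_apply, mul_comm]
  rw [h2, _root_.map_smul, LinearMap.trace_id]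
  simp


lemma cont_term (c : ℂ) (ω : ℝ) :
    Continuous fun t : ℝ => (c * Complex.exp (Complex.I * (ω : ℂ) * (t : ℂ))).re := by
  fun_prop

lemma avg_term (c : ℂ) (ω : ℝ) :
    Tendsto (fun τ : ℝ =>
        (1 / τ) * ∫ t in (0:ℝ)..τ, (c * Complex.exp (Complex.I * (ω : ℂ) * (t : ℂ))).re)
      atTop (nhds (if ω = 0 then c.re else 0)) := by
  rcases eq_or_ne ω 0 with h | h
  · simp only [h, if_pos rfl, Complex.ofReal_zero, mul_zero, zero_mul, Complex.exp_zero,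
      mul_one]
    have : (fun τ : ℝ => (1 / τ) * ∫ t in (0:ℝ)..τ, (c.re : ℝ)) =ᶠ[atTop] fun _ => c.re := by
      filter_upwards [eventually_gt_atTop (0:ℝ)] with τ hτ
      rw [intervalIntegral.integral_const, smul_eq_mul, sub_zero]
      field_simp
    exact Tendsto.congr' this.symm tendsto_const_nhds
  · rw [if_neg h]
    have hc : (Complex.I * (ω : ℂ)) ≠ 0 := by
      simp [Complex.ext_iff, h]
    have hint : ∀ τ : ℝ, (∫ t in (0:ℝ)..τ, (c * Complex.exp (Complex.I * (ω : ℂ) * (t : ℂ))).re)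
        = (c * ((Complex.exp (Complex.I * (ω : ℂ) * τ) - 1) / (Complex.I * (ω : ℂ)))).re := by
      intro τ
      have hi : IntervalIntegrable (fun t : ℝ => c * Complex.exp (Complex.I * (ω : ℂ) * (t : ℂ)))
          volume 0 τ := by
        apply Continuous.intervalIntegrable; fun_prop
      have := (Complex.reCLM.intervalIntegral_comp_comm hi (a := 0) (b := τ)).symm
      simp only [Complex.reCLM_apply] at this
      rw [← this, intervalIntegral.integral_const_mul]
      congr 2
      have := integral_exp_mul_complex (a := 0) (b := τ) hc
      simp only [Complex.ofReal_zero, mul_zero, Complex.exp_zero] at this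
      rw [mul_assoc] at this ⊢
      rw [this]
    have hbound : ∀ᶠ τ : ℝ in atTop,
        ‖(1 / τ) * ∫ t in (0:ℝ)..τ, (c * Complex.exp (Complex.I * (ω : ℂ) * (t : ℂ))).re‖
          ≤ (‖c‖ * (2 / ‖Complex.I * (ω : ℂ)‖)) / τ := by
      filter_upwards [eventually_gt_atTop (0:ℝ)] with τ hτ
      rw [hint τ, norm_mul]
      rw [div_eq_mul_inv (‖c‖ * _), mul_comm (‖c‖ * _), ← one_div]
      gcongr
      · simp [abs_of_pos hτ, le_refl]
      calc ‖(c * ((Complex.exp (Complex.I * (ω : ℂ) * τ) - 1) / (Complex.I * (ω : ℂ)))).re‖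
          ≤ ‖c * ((Complex.exp (Complex.I * (ω : ℂ) * τ) - 1) / (Complex.I * (ω : ℂ)))‖ :=
            Complex.abs_re_le_norm _
        _ ≤ ‖c‖ * (2 / ‖Complex.I * (ω : ℂ)‖) := by
            rw [norm_mul, norm_div]
            gcongr
            calc ‖Complex.exp (Complex.I * (ω : ℂ) * τ) - 1‖
                ≤ ‖Complex.exp (Complex.I * (ω : ℂ) * τ)‖ + ‖(1:ℂ)‖ := norm_sub_le _ _
              _ ≤ 2 := by
                  have h0 : (Complex.I * (ω : ℂ) * (τ:ℂ)).re = 0 := by simp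
                  rw [Complex.norm_exp, h0]
                  norm_num
    have hlim : Tendsto (fun τ : ℝ => (‖c‖ * (2 / ‖Complex.I * (ω : ℂ)‖)) / τ) atTop (nhds 0) :=
      tendsto_const_nhds.div_atTop tendsto_id
    exact squeeze_zero_norm' hbound hlim

end ThermalizationHelpers

set_option maxHeartbeats 1000000 in
/-- **Thermalization of mixed initial states with large diagonal effective dimension.**
For a density matrix `ρ` with range in the span of an orthonormal family `(ψ_j)` of
eigenvectors of `H` with pairwise distinct eigenvalues, and `ρ(t) = exp(−itH) ρ exp(itH)`,
the long-time average of `Tr(ρ(t)P)` converges to `∑_j ⟪ψ_j, ρ ψ_j⟫·⟪ψ_j, P ψ_j⟫`.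
Moreover, under the thermodynamic bound `(1/D)∑_j ⟪ψ_j, P ψ_j⟫ ≤ exp(−γV)` and the diagonal
effective-dimension bound `(∑_j ⟪ψ_j, ρ ψ_j⟫²)⁻¹ ≥ exp(−ηV)·D` with `γ − η > 2(α+ν)`, the
time average over `[0,τ]` is at most `exp(−(α+ν)V)` for all sufficiently large `τ`. -/
theorem mixed_state_thermalization_diagonal_effective_dimension
    {E : Type*} [NormedAddCommGroup E] [InnerProductSpace ℂ E] [FiniteDimensional ℂ E]
    (H : E →L[ℂ] E) (hH : IsSelfAdjoint H)
    {J : Type*} [Fintype J] {D : ℕ} (hD : 1 ≤ D) (hcard : Fintype.card J = D)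
    (ψ : J → E) (hψ : Orthonormal ℂ ψ)
    (Ej : J → ℝ) (hEj : Function.Injective Ej)
    (heig : ∀ j, H (ψ j) = (Ej j : ℂ) • ψ j)
    (ρ : E →L[ℂ] E) (hρ : IsSelfAdjoint ρ)
    (hρpos : ∀ x : E, 0 ≤ (inner ℂ x (ρ x) : ℂ).re)
    (hρtr : LinearMap.trace ℂ E ρ.toLinearMap = 1)
    (hρrange : LinearMap.range ρ.toLinearMap ≤ Submodule.span ℂ (Set.range ψ))
    (ρt : ℝ → E →L[ℂ] E)
    (hρt : ∀ t : ℝ, ρt t =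
      NormedSpace.exp (((-Complex.I) * (t : ℂ)) • H) ∘L ρ ∘L
        NormedSpace.exp ((Complex.I * (t : ℂ)) • H))
    (P : E →L[ℂ] E) (hP : IsSelfAdjoint P)
    (hP0 : ∀ x : E, 0 ≤ (inner ℂ x (P x) : ℂ).re)
    (hP1 : ∀ x : E, (inner ℂ x (P x) : ℂ).re ≤ ‖x‖ ^ 2) :
    Tendsto (fun τ : ℝ =>
        (1 / τ) * ∫ t in (0:ℝ)..τ, (LinearMap.trace ℂ E ((ρt t) ∘L P).toLinearMap).re)
      atTop
      (nhds (∑ j, (inner ℂ (ψ j) (ρ (ψ j)) : ℂ).re * (inner ℂ (ψ j) (P (ψ j)) : ℂ).re)) ∧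
    (∀ V α ν η γ : ℝ, 0 < V → 0 < α → 0 < ν → 0 ≤ η → η < γ → 2 * (α + ν) < γ - η →
      (1 / (D : ℝ)) * ∑ j, (inner ℂ (ψ j) (P (ψ j)) : ℂ).re ≤ Real.exp (-γ * V) →
      Real.exp (-η * V) * (D : ℝ) ≤ (∑ j, ((inner ℂ (ψ j) (ρ (ψ j)) : ℂ).re) ^ 2)⁻¹ →
      ∃ τ0 : ℝ, 0 < τ0 ∧ ∀ τ : ℝ, τ0 ≤ τ →
        (1 / τ) * ∫ t in (0:ℝ)..τ, (LinearMap.trace ℂ E ((ρt t) ∘L P).toLinearMap).re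
          ≤ Real.exp (-(α + ν) * V)) := by
  classical
  -- matrix elements
  set r : J → J → ℂ := fun j k => inner ℂ (ψ j) (ρ (ψ k)) with hr_def
  set p : J → J → ℂ := fun k j => inner ℂ (ψ k) (P (ψ j)) with hp_def
  -- expansion of vectors in the span
  have hspan : ∀ v : E, v ∈ Submodule.span ℂ (Set.range ψ) →
      v = ∑ j, (inner ℂ (ψ j) v : ℂ) • ψ j := by
    intro v hv
    obtain ⟨c, hc⟩ := (Submodule.mem_span_range_iff_exists_fun ℂ).mp hv
    have hci : ∀ i, (inner ℂ (ψ i) v : ℂ) = c i := by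
      intro i; rw [← hc]; exact hψ.inner_right_fintype c i
    calc v = ∑ j, c j • ψ j := hc.symm
      _ = ∑ j, (inner ℂ (ψ j) v : ℂ) • ψ j := by simp_rw [hci]
  -- self-adjointness moves
  have hρadj : ∀ x y : E, (inner ℂ x (ρ y) : ℂ) = inner ℂ (ρ x) y := by
    intro x y
    conv_lhs => rw [← hρ.adjoint_eq]
    exact ContinuousLinearMap.adjoint_inner_right ρ x y
  have hPadj : ∀ x y : E, (inner ℂ x (P y) : ℂ) = inner ℂ (P x) y := by
    intro x y
    conv_lhs => rw [← hP.adjoint_eq]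
    exact ContinuousLinearMap.adjoint_inner_right P x y
  have hrconj : ∀ j k, (starRingEnd ℂ) (r k j) = r j k := by
    intro j k
    rw [hr_def]
    simp only
    rw [inner_conj_symm, ← hρadj]
  -- expansion of ρ
  have hρ_eq : ∀ y : E, ρ y = ∑ j, (∑ k, r j k * (inner ℂ (ψ k) y : ℂ)) • ψ j := by
    intro y
    have h1 : ρ y = ∑ j, (inner ℂ (ψ j) (ρ y) : ℂ) • ψ j :=
      hspan _ (hρrange ⟨y, rfl⟩)
    rw [h1]
    refine Finset.sum_congr rfl fun j _ => ?_
    congr 1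
    have h2 : ρ (ψ j) = ∑ k, r k j • ψ k := hspan _ (hρrange ⟨ψ j, rfl⟩)
    rw [hρadj, h2, sum_inner]
    refine Finset.sum_congr rfl fun k _ => ?_
    rw [inner_smul_left, hrconj]
  -- ρ as a sum of rank-one operators
  have hρCLM : ρ = ∑ j, ∑ k, r j k • ((innerSL ℂ (ψ k)).smulRight (ψ j)) := by
    ext y
    rw [hρ_eq y]
    simp only [ContinuousLinearMap.sum_apply, ContinuousLinearMap.smul_apply,
      ContinuousLinearMap.smulRight_apply, coe_innerSL_apply, innerSL_apply_apply, smul_smul,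
      Finset.sum_smul]
  have horth : ∀ k j : J, (inner ℂ (ψ k) (ψ j) : ℂ) = if k = j then 1 else 0 :=
    fun k j => orthonormal_iff_ite.mp hψ k j
  -- trace of ρ
  have htraceρ : LinearMap.trace ℂ E ρ.toLinearMap = ∑ j, r j j := by
    conv_lhs => rw [hρCLM]
    push_cast [ContinuousLinearMap.coe_sum, ContinuousLinearMap.coe_smul]
    rw [map_sum]
    refine Finset.sum_congr rfl fun j _ => ?_
    rw [map_sum]
    have : ∀ k : J, (LinearMap.trace ℂ E) (r j k • ((innerSL ℂ (ψ k)).smulRight (ψ j) :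
        E →L[ℂ] E).toLinearMap) = r j k * (if k = j then 1 else 0) := by
      intro k
      rw [_root_.map_smul, trace_rankOne, innerSL_apply_apply, horth, smul_eq_mul]
    simp only [this, mul_ite, mul_one, mul_zero, Finset.sum_ite_eq', Finset.mem_univ, if_pos]
  -- exponentials on eigenvectors
  have hexp_eig : ∀ (t : ℝ) (j : J),
      NormedSpace.exp (((-Complex.I) * (t:ℂ)) • H) (ψ j)
        = Complex.exp ((-Complex.I) * (t:ℂ) * (Ej j : ℂ)) • ψ j := by
    intro t j
    apply exp_apply_eigen
    rw [ContinuousLinearMap.smul_apply, heig, smul_smul]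
  have hstar : ∀ t : ℝ, star (NormedSpace.exp ((Complex.I * (t:ℂ)) • H))
      = NormedSpace.exp (((-Complex.I) * (t:ℂ)) • H) := by
    intro t
    rw [NormedSpace.star_exp, star_smul, hH.star_eq]
    congr 1
    simp [Complex.ext_iff]
  have hBinner : ∀ (t : ℝ) (k : J) (y : E),
      (inner ℂ (ψ k) (NormedSpace.exp ((Complex.I * (t:ℂ)) • H) y) : ℂ)
        = Complex.exp (Complex.I * (t:ℂ) * (Ej k : ℂ)) * (inner ℂ (ψ k) y : ℂ) := by
    intro t k y
    rw [← ContinuousLinearMap.adjoint_inner_left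
      (NormedSpace.exp ((Complex.I * (t:ℂ)) • H)) y (ψ k),
      ← ContinuousLinearMap.star_eq_adjoint, hstar, hexp_eig, inner_smul_left]
    congr 1
    rw [← Complex.exp_conj]
    congr 1
    simp [Complex.ext_iff]
  -- the trace formula
  have htr : ∀ t : ℝ, LinearMap.trace ℂ E ((ρt t ∘L P).toLinearMap)
      = ∑ q : J × J, (r q.1 q.2 * p q.2 q.1) *
          Complex.exp (Complex.I * ((Ej q.2 - Ej q.1 : ℝ) : ℂ) * (t:ℂ)) := by
    intro t
    set A := NormedSpace.exp (((-Complex.I) * (t:ℂ)) • H) with hA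
    set B := NormedSpace.exp ((Complex.I * (t:ℂ)) • H) with hB
    have hop : ρt t ∘L P = ∑ j, ∑ k, r j k •
        (((innerSL ℂ (ψ k)).comp (B ∘L P)).smulRight (A (ψ j))) := by
      ext x
      rw [hρt t]
      simp only [ContinuousLinearMap.comp_apply, ContinuousLinearMap.sum_apply,
        ContinuousLinearMap.smul_apply, ContinuousLinearMap.smulRight_apply,
        ContinuousLinearMap.coe_comp', Function.comp_apply, innerSL_apply_apply]
      rw [hρ_eq (B (P x)), map_sum]
      refine Finset.sum_congr rfl fun j _ => ?_
      rw [_root_.map_smul, Finset.sum_smul]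
      refine Finset.sum_congr rfl fun k _ => ?_
      rw [smul_smul]
    rw [hop]
    push_cast [ContinuousLinearMap.coe_sum, ContinuousLinearMap.coe_smul]
    rw [map_sum, Fintype.sum_prod_type]
    refine Finset.sum_congr rfl fun j _ => ?_
    rw [map_sum]
    refine Finset.sum_congr rfl fun k _ => ?_
    rw [_root_.map_smul, trace_rankOne, smul_eq_mul]
    have hval : ((innerSL ℂ (ψ k)).comp (B ∘L P)) (A (ψ j))
        = Complex.exp ((-Complex.I) * (t:ℂ) * (Ej j : ℂ)) *
            (Complex.exp (Complex.I * (t:ℂ) * (Ej k : ℂ)) * p k j) := by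
      simp only [ContinuousLinearMap.coe_comp', Function.comp_apply, innerSL_apply_apply]
      rw [hexp_eig, _root_.map_smul, _root_.map_smul, inner_smul_right, hBinner]
    rw [hval]
    have hee : Complex.exp ((-Complex.I) * (t:ℂ) * (Ej j : ℂ)) *
        Complex.exp (Complex.I * (t:ℂ) * (Ej k : ℂ))
          = Complex.exp (Complex.I * ((Ej k : ℂ) - (Ej j : ℂ)) * (t:ℂ)) := by
      rw [← Complex.exp_add]
      congr 1
      ring
    calc r j k * (Complex.exp ((-Complex.I) * (t:ℂ) * (Ej j : ℂ)) *
          (Complex.exp (Complex.I * (t:ℂ) * (Ej k : ℂ)) * p k j))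
        = (r j k * p k j) * (Complex.exp ((-Complex.I) * (t:ℂ) * (Ej j : ℂ)) *
            Complex.exp (Complex.I * (t:ℂ) * (Ej k : ℂ))) := by ring
      _ = _ := by rw [hee]
  -- reality of diagonal entries
  have hrim : ∀ j, (r j j).im = 0 := fun j => Complex.conj_eq_iff_im.mp (hrconj j j)
  have hpconj : ∀ j k, (starRingEnd ℂ) (p k j) = p j k := by
    intro j k
    rw [hp_def]
    simp only
    rw [inner_conj_symm, ← hPadj]
  have hpim : ∀ j, (p j j).im = 0 := fun j => Complex.conj_eq_iff_im.mp (hpconj j j)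
  have hiff : ∀ j k : J, (Ej k - Ej j = 0) ↔ (k = j) := by
    intro j k; rw [sub_eq_zero, hEj.eq_iff]
  -- the limit value as a sum over pairs
  have hLsum : (∑ q : J × J, if (Ej q.2 - Ej q.1 : ℝ) = 0 then (r q.1 q.2 * p q.2 q.1).re else 0)
      = ∑ j, (inner ℂ (ψ j) (ρ (ψ j)) : ℂ).re * (inner ℂ (ψ j) (P (ψ j)) : ℂ).re := by
    rw [Fintype.sum_prod_type]
    calc (∑ j, ∑ k, if (Ej k - Ej j : ℝ) = 0 then (r j k * p k j).re else 0)
        = ∑ j, ∑ k, (if k = j then (r j k * p k j).re else 0) :=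
          Finset.sum_congr rfl fun j _ => Finset.sum_congr rfl fun k _ =>
            if_congr (hiff j k) rfl rfl
      _ = ∑ j, (r j j * p j j).re := by simp [Finset.sum_ite_eq']
      _ = ∑ j, (inner ℂ (ψ j) (ρ (ψ j)) : ℂ).re * (inner ℂ (ψ j) (P (ψ j)) : ℂ).re := by
          refine Finset.sum_congr rfl fun j _ => ?_
          rw [Complex.mul_re, hrim, hpim]
          simp [hr_def, hp_def]
  have hconteach : ∀ (q : J × J), Continuous fun t : ℝ =>
      ((r q.1 q.2 * p q.2 q.1) * Complex.exp (Complex.I * ((Ej q.2 - Ej q.1 : ℝ) : ℂ) * (t:ℂ))).re := by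
    intro q; fun_prop
  have havg : ∀ τ : ℝ,
      (1 / τ) * ∫ t in (0:ℝ)..τ, (LinearMap.trace ℂ E ((ρt t ∘L P).toLinearMap)).re
      = ∑ q : J × J, (1 / τ) * ∫ t in (0:ℝ)..τ,
          ((r q.1 q.2 * p q.2 q.1) * Complex.exp (Complex.I * ((Ej q.2 - Ej q.1 : ℝ) : ℂ) * (t:ℂ))).re := by
    intro τ
    rw [← Finset.mul_sum]
    congr 1
    rw [← intervalIntegral.integral_finset_sum]
    · refine intervalIntegral.integral_congr fun t _ => ?_
      rw [htr t, Complex.re_sum]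
    · intro q _
      exact (hconteach q).intervalIntegrable _ _
  have hmain : Tendsto (fun τ : ℝ => (1/τ) * ∫ t in (0:ℝ)..τ,
      (LinearMap.trace ℂ E ((ρt t ∘L P).toLinearMap)).re) atTop
      (nhds (∑ j, (inner ℂ (ψ j) (ρ (ψ j)) : ℂ).re * (inner ℂ (ψ j) (P (ψ j)) : ℂ).re)) := by
    rw [← hLsum]
    exact Tendsto.congr (fun τ => (havg τ).symm)
      (tendsto_finset_sum _ fun q _ => avg_term _ _)
  refine ⟨hmain, ?_⟩
  intro V α ν η γ hV hα hν hη hηγ hgap hPbound hDeff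
  -- notation
  set Rr : J → ℝ := fun j => (inner ℂ (ψ j) (ρ (ψ j)) : ℂ).re with hRr
  set Rp : J → ℝ := fun j => (inner ℂ (ψ j) (P (ψ j)) : ℂ).re with hRp
  have hD' : (0:ℝ) < (D:ℝ) := by
    have : (1:ℝ) ≤ (D:ℝ) := by exact_mod_cast hD
    linarith
  have hRr0 : ∀ j, 0 ≤ Rr j := fun j => hρpos _
  have hRp0 : ∀ j, 0 ≤ Rp j := fun j => hP0 _
  have hRp1 : ∀ j, Rp j ≤ 1 := by
    intro j
    have := hP1 (ψ j)
    rwa [hψ.1 j, one_pow] at this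
  -- trace of ρ equals sum of diagonal entries
  have hsumRr : ∑ j, Rr j = 1 := by
    have h1 : (∑ j, r j j) = 1 := by rw [← htraceρ, hρtr]
    have h2 : (∑ j, r j j).re = 1 := by rw [h1]; simp
    rw [Complex.re_sum] at h2
    exact h2
  have hSnn : (0:ℝ) ≤ ∑ j, Rr j ^ 2 := Finset.sum_nonneg fun j _ => sq_nonneg _
  have hSpos : (0:ℝ) < ∑ j, Rr j ^ 2 := by
    rcases hSnn.lt_or_eq with h | h
    · exact h
    · exfalso
      have hz := (Finset.sum_eq_zero_iff_of_nonneg (fun j _ => sq_nonneg (Rr j))).mp h.symm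
      have h0 : (1:ℝ) = 0 := by
        rw [← hsumRr]
        refine Finset.sum_eq_zero fun j hj => ?_
        have := hz j hj
        nlinarith [this]
      norm_num at h0
  -- bound the sums
  have hS : (∑ j, Rr j ^ 2) ≤ (Real.exp (-η * V) * (D:ℝ))⁻¹ := by
    have h1 : (0:ℝ) < Real.exp (-η * V) * (D:ℝ) := by positivity
    have h2 := inv_anti₀ h1 hDeff
    rwa [inv_inv] at h2
  have hT : (∑ j, Rp j) ≤ (D:ℝ) * Real.exp (-γ * V) := by
    have := mul_le_mul_of_nonneg_left hPbound (le_of_lt hD')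
    rw [← mul_assoc, mul_one_div, div_self (ne_of_gt hD'), one_mul] at this
    exact this
  have hT2 : (∑ j, Rp j ^ 2) ≤ ∑ j, Rp j := by
    refine Finset.sum_le_sum fun j _ => ?_
    calc Rp j ^ 2 = Rp j * Rp j := sq (Rp j) ▸ rfl
      _ ≤ 1 * Rp j := mul_le_mul_of_nonneg_right (hRp1 j) (hRp0 j)
      _ = Rp j := one_mul _
  -- Cauchy-Schwarz
  set L : ℝ := ∑ j, Rr j * Rp j with hLdef
  have hL0 : 0 ≤ L := Finset.sum_nonneg fun j _ => mul_nonneg (hRr0 j) (hRp0 j)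
  have hcs : L ^ 2 ≤ (∑ j, Rr j ^ 2) * (∑ j, Rp j ^ 2) :=
    Finset.sum_mul_sq_le_sq_mul_sq _ _ _
  have hTnn : (0:ℝ) ≤ ∑ j, Rp j ^ 2 := Finset.sum_nonneg fun j _ => sq_nonneg _
  have hL2 : L ^ 2 ≤ Real.exp ((η - γ) * V) := by
    have h1 : L ^ 2 ≤ (Real.exp (-η * V) * (D:ℝ))⁻¹ * ((D:ℝ) * Real.exp (-γ * V)) := by
      calc L ^ 2 ≤ (∑ j, Rr j ^ 2) * (∑ j, Rp j ^ 2) := hcs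
        _ ≤ (Real.exp (-η * V) * (D:ℝ))⁻¹ * ((D:ℝ) * Real.exp (-γ * V)) := by
            apply mul_le_mul hS (hT2.trans hT) hTnn
            positivity
    have h2 : (0:ℝ) < Real.exp (-η * V) * (D:ℝ) := by positivity
    have he : Real.exp ((η - γ) * V) * (Real.exp (-η * V) * (D:ℝ))
        = (D:ℝ) * Real.exp (-γ * V) := by
      have hx : Real.exp ((η - γ) * V) * Real.exp (-η * V) = Real.exp (-γ * V) := by
        rw [← Real.exp_add]; congr 1; ring
      calc Real.exp ((η - γ) * V) * (Real.exp (-η * V) * (D:ℝ))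
          = (Real.exp ((η - γ) * V) * Real.exp (-η * V)) * (D:ℝ) := by ring
        _ = Real.exp (-γ * V) * (D:ℝ) := by rw [hx]
        _ = (D:ℝ) * Real.exp (-γ * V) := by ring
    calc L ^ 2 ≤ (Real.exp (-η * V) * (D:ℝ))⁻¹ * ((D:ℝ) * Real.exp (-γ * V)) := h1
      _ = Real.exp ((η - γ) * V) := by
          rw [← he, mul_comm (Real.exp ((η - γ) * V)) _, ← mul_assoc,
            inv_mul_cancel₀ (ne_of_gt h2), one_mul]
  have hLe : L ≤ Real.exp ((η - γ) / 2 * V) := by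
    have he2 : Real.exp ((η - γ) / 2 * V) ^ 2 = Real.exp ((η - γ) * V) := by
      rw [sq, ← Real.exp_add]; congr 1; ring
    have := hL2.trans_eq he2.symm
    exact (pow_le_pow_iff_left₀ hL0 (Real.exp_pos _).le two_ne_zero).mp this
  have hLlt : L < Real.exp (-(α + ν) * V) := by
    have h1 : Real.exp ((η - γ) / 2 * V) < Real.exp (-(α + ν) * V) := by
      apply Real.exp_lt_exp.mpr
      have : (η - γ) / 2 < -(α + ν) := by linarith
      nlinarith
    exact lt_of_le_of_lt hLe h1
  have hev : ∀ᶠ τ : ℝ in atTop,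
      (1 / τ) * ∫ t in (0:ℝ)..τ, (LinearMap.trace ℂ E ((ρt t ∘L P).toLinearMap)).re
        < Real.exp (-(α + ν) * V) :=
    hmain.eventually_lt_const hLlt
  obtain ⟨a, ha⟩ := eventually_atTop.mp hev
  refine ⟨max a 1, lt_of_lt_of_le zero_lt_one (le_max_right a 1), fun τ hτ => ?_⟩
  exact (ha τ (le_trans (le_max_left a 1) hτ)).le
end
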